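/- Let D be a division ring with derivation δ and τ an automorphism of D. The map H_{τ,0,1} : Σ b_i t^i ↦ Σ τ(b_i) t^i is a ring automorphism of D[t;δ] if and only if δ∘τ = τ∘δ. -/

import Mathlib

/-- A differential (Ore) polynomial ring `D[t;δ]`: a ring containing `D` via the
ring embedding `ι`, with an element `t` satisfying `t·a = a·t + δ(a)`, and which is
freely spanned as a left `D`-module by the powers of `t` (via `rep`). -/
structure DiffPolyRing (D : Type*) [Ring D] (δ : D → D) where
  carrier : Type*
  [ring : Ring carrier]
  ι : D →+* carrier
  t : carrier
  tcomm : ∀ a : D, t * ι a = ι a * t + ι (δ a)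
  rep : carrier ≃+ (ℕ →₀ D)
  rep_symm_apply : ∀ c : ℕ →₀ D, rep.symm c = c.sum fun i a => ι a * t ^ i

attribute [instance] DiffPolyRing.ring

namespace DiffPolyRing

variable {D : Type*} [Ring D] {δ : D → D}

/-- The degree of a differential polynomial, with `deg 0 = ⊥`. -/
noncomputable def deg (P : DiffPolyRing D δ) (p : P.carrier) : WithBot ℕ :=
  (P.rep p).support.max

end DiffPolyRing

/-- `H_{τ,0,1} : Σ b_i t^i ↦ Σ τ(b_i) t^i` is a ring automorphism of
`D[t;δ]` iff `δ∘τ = τ∘δ`. -/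
theorem H_tau_0_1_automorphism_iff
    (D : Type*) [DivisionRing D] (δ : D → D)
    (hadd : ∀ a b : D, δ (a + b) = δ a + δ b)
    (hmul : ∀ a b : D, δ (a * b) = a * δ b + δ a * b)
    (P : DiffPolyRing D δ) (τ : D ≃+* D)
    (H : P.carrier → P.carrier)
    (hH : ∀ x : P.carrier, H x = (P.rep x).sum fun i b => P.ι (τ b) * P.t ^ i) :
    ((∀ x y : P.carrier, H (x + y) = H x + H y) ∧
     (∀ x y : P.carrier, H (x * y) = H x * H y) ∧
     H 1 = 1 ∧ Function.Bijective H) ↔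
    (∀ a : D, δ (τ a) = τ (δ a)) := by
  classical
  have hH0 : ∀ x, H x = P.rep.symm (Finsupp.mapRange τ (map_zero τ) (P.rep x)) := by
    intro x
    rw [hH, P.rep_symm_apply, Finsupp.sum_mapRange_index]
    intro i; simp
  have hrep_single : ∀ (j : ℕ) (b : D),
      P.rep.symm (Finsupp.single j b) = P.ι b * P.t ^ j := by
    intro j b
    rw [P.rep_symm_apply, Finsupp.sum_single_index]
    simp
  have Hmono : ∀ (j : ℕ) (b : D), H (P.ι b * P.t ^ j) = P.ι (τ b) * P.t ^ j := by
    intro j b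
    rw [hH0, ← hrep_single j b, AddEquiv.apply_symm_apply, Finsupp.mapRange_single,
      hrep_single]
  have Hadd : ∀ x y : P.carrier, H (x + y) = H x + H y := by
    intro x y
    simp only [hH0, map_add]
    rw [Finsupp.mapRange_add (map_add τ), map_add]
  have H0 : H 0 = 0 := by simp [hH0]
  have Hι : ∀ a : D, H (P.ι a) = P.ι (τ a) := by
    intro a; have := Hmono 0 a; simpa using this
  have Ht : H P.t = P.t := by
    have := Hmono 1 1; simpa using this
  have H1 : H 1 = 1 := by
    have := Hι 1; simpa using this
  constructor
  · rintro ⟨-, hm, -, -⟩ a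
    have hnt : Nontrivial P.carrier := P.rep.toEquiv.nontrivial
    have hinj : Function.Injective P.ι := P.ι.injective
    have h1 := hm P.t (P.ι a)
    rw [P.tcomm, Hadd, Hι, Ht, Hι, P.tcomm] at h1
    have h2 : H (P.ι a * P.t) = P.ι (τ a) * P.t := by
      have := Hmono 1 a; simpa using this
    rw [h2] at h1
    exact (hinj (add_left_cancel h1)).symm
  · intro hc
    have tι : ∀ (b : D) (j : ℕ),
        P.t * (P.ι b * P.t ^ j) = P.ι b * P.t ^ (j + 1) + P.ι (δ b) * P.t ^ j := by
      intro b j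
      rw [← mul_assoc, P.tcomm, add_mul, mul_assoc, ← pow_succ']
    have keyt : ∀ y : P.carrier, H (P.t * y) = P.t * H y := by
      intro y
      obtain ⟨c, rfl⟩ : ∃ c, P.rep.symm c = y := ⟨P.rep y, P.rep.symm_apply_apply y⟩
      induction c using Finsupp.induction with
      | zero => simp [H0]
      | single_add j b f _ _ ih =>
        rw [map_add, hrep_single, mul_add, Hadd, ih, tι, Hadd, Hmono, Hmono, Hadd,
          Hmono, mul_add, tι, hc]
    have keypow : ∀ (i : ℕ) (y : P.carrier), H (P.t ^ i * y) = P.t ^ i * H y := by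
      intro i
      induction i with
      | zero => intro y; simp
      | succ i ih =>
        intro y
        rw [pow_succ, mul_assoc, ih, keyt, ← mul_assoc, ← pow_succ]
    have keyι : ∀ (a : D) (y : P.carrier), H (P.ι a * y) = P.ι (τ a) * H y := by
      intro a y
      obtain ⟨c, rfl⟩ : ∃ c, P.rep.symm c = y := ⟨P.rep y, P.rep.symm_apply_apply y⟩
      induction c using Finsupp.induction with
      | zero => simp [H0]
      | single_add j b f _ _ ih =>
        rw [map_add, hrep_single, mul_add, Hadd, ih, ← mul_assoc, ← map_mul, Hadd,
          Hmono, map_mul, map_mul, mul_assoc, mul_add, Hmono]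
    refine ⟨Hadd, ?_, H1, ?_⟩
    · intro x y
      obtain ⟨c, rfl⟩ : ∃ c, P.rep.symm c = x := ⟨P.rep x, P.rep.symm_apply_apply x⟩
      induction c using Finsupp.induction with
      | zero => simp [H0]
      | single_add j b f _ _ ih =>
        rw [map_add, hrep_single, add_mul, Hadd, ih, Hadd, Hmono, mul_assoc, keyι,
          keypow, ← mul_assoc, add_mul]
    · have hE : H = fun x => P.rep.symm (Finsupp.mapRange τ (map_zero τ) (P.rep x)) :=
        funext hH0
      rw [hE]
      exact P.rep.symm.bijective.comp
        ((Finsupp.mapRange.addEquiv (τ.toAddEquiv)).bijective.comp P.rep.bijective)
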